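/- (Descent Lemma for Byz-EF21.) Let x^t, g_i^t (i ∈ 𝒢) and g^t be random vectors with x^{t+1} = x^t − γ g^t, γ > 0, cδ > 0, and suppose g^t satisfies the robust-aggregation bound E‖g^t − ḡ^t‖² ≤ cδ·(1/(G(G−1))) Σ_{i,l∈𝒢, i≠l} E‖g_i^t − g_l^t‖², where ḡ^t = (1/G) Σ_{i∈𝒢} g_i^t. Then with κ = 1 − 8Bcδ(1 + 1/√(8cδ)): E[f(x^{t+1})] ≤ E[f(x^t)] − (γκ/2)·E‖∇f(x^t)‖² − (1/(2γ) − L/2)·E‖x^{t+1} − x^t‖² + (γ/2)(1 + √(8cδ))²·E[(1/G) Σ_{i∈𝒢} ‖g_i^t − ∇f_i(x^t)‖²] + 4γcδ(1 + 1/√(8cδ))ζ². -/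

import Mathlib

open MeasureTheory Finset
open scoped RealInnerProductSpace

open MeasureTheory Finset
open scoped RealInnerProductSpace

section aux
variable {F : Type*} [NormedAddCommGroup F] [InnerProductSpace ℝ F] [CompleteSpace F]

lemma fderiv_apply_eq_inner_gradient (f : F → ℝ) (x v : F) :
    fderiv ℝ f x v = ⟪gradient f x, v⟫ := by
  rw [show gradient f x = (InnerProductSpace.toDual ℝ F).symm (fderiv ℝ f x) from rfl]
  rw [← InnerProductSpace.toDual_apply_apply, LinearIsometryEquiv.apply_symm_apply]

lemma gradient_avg {ι : Type*} [Fintype ι] (fS : ι → F → ℝ) (hdiff : ∀ i, Differentiable ℝ (fS i))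
    (c : ℝ) (x : F) :
    gradient (fun x => c * ∑ i, fS i x) x = c • ∑ i, gradient (fS i) x := by
  have h1 : HasFDerivAt (fun x => c * ∑ i, fS i x)
      (c • ∑ i, fderiv ℝ (fS i) x) x :=
    (HasFDerivAt.fun_sum fun i _ => ((hdiff i) x).hasFDerivAt).const_mul c
  have h2 := h1.fderiv
  rw [show (gradient (fun x => c * ∑ i, fS i x) x) = (InnerProductSpace.toDual ℝ F).symm (fderiv ℝ (fun x => c * ∑ i, fS i x) x) from rfl, h2, _root_.map_smul, map_sum]
  rfl

-- descent lemma
lemma descent_aux (f : F → ℝ) (hf : Differentiable ℝ f) {L : ℝ} (hL : 0 ≤ L)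
    (hlip : ∀ x y, ‖gradient f x - gradient f y‖ ≤ L * ‖x - y‖) (x y : F) :
    f y ≤ f x + ⟪gradient f x, y - x⟫ + L / 2 * ‖y - x‖ ^ 2 := by
  set v := y - x with hv
  have hline : ∀ t : ℝ, HasDerivAt (fun t : ℝ => f (x + t • v))
      (⟪gradient f (x + t • v), v⟫) t := by
    intro t
    have h1 : HasDerivAt (fun t : ℝ => x + t • v) v t := by
      simpa using ((hasDerivAt_id t).smul_const v).const_add x
    have := ((hf (x + t • v)).hasFDerivAt).comp_hasDerivAt t h1
    rw [fderiv_apply_eq_inner_gradient] at this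
    exact this
  set φ : ℝ → ℝ := fun t => f (x + t • v) - t * ⟪gradient f x, v⟫ - L * t ^ 2 / 2 * ‖v‖ ^ 2
    with hφ
  have hφd : ∀ t : ℝ, HasDerivAt φ
      (⟪gradient f (x + t • v), v⟫ - ⟪gradient f x, v⟫ - L * t * ‖v‖ ^ 2) t := by
    intro t
    have h2 : HasDerivAt (fun t : ℝ => t * ⟪gradient f x, v⟫) ⟪gradient f x, v⟫ t := by
      simpa using (hasDerivAt_id t).mul_const _
    have h3 : HasDerivAt (fun t : ℝ => L * t ^ 2 / 2 * ‖v‖ ^ 2) (L * t * ‖v‖ ^ 2) t := by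
      have : HasDerivAt (fun t : ℝ => t ^ 2) (2 * t) t := by
        simpa using hasDerivAt_pow 2 t
      have := ((this.const_mul L).div_const 2).mul_const (‖v‖ ^ 2)
      convert this using 1
      · rfl
      · rfl
      ring
    exact ((hline t).sub h2).sub h3
  have hanti : AntitoneOn φ (Set.Icc (0:ℝ) 1) := by
    apply antitoneOn_of_deriv_nonpos (convex_Icc 0 1)
    · exact Continuous.continuousOn (by
        have : Differentiable ℝ φ := fun t => (hφd t).differentiableAt
        exact this.continuous)
    · intro t ht
      exact ((hφd t).differentiableAt).differentiableWithinAt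
    · intro t ht
      rw [interior_Icc] at ht
      rw [(hφd t).deriv]
      have h4 : ⟪gradient f (x + t • v) - gradient f x, v⟫ ≤ L * t * ‖v‖ ^ 2 := by
        calc ⟪gradient f (x + t • v) - gradient f x, v⟫
            ≤ ‖gradient f (x + t • v) - gradient f x‖ * ‖v‖ := real_inner_le_norm _ _
          _ ≤ (L * ‖(x + t • v) - x‖) * ‖v‖ := by
              apply mul_le_mul_of_nonneg_right (hlip _ _) (norm_nonneg _)
          _ = L * t * ‖v‖ ^ 2 := by
              rw [add_sub_cancel_left, norm_smul]
              simp [abs_of_nonneg ht.1.le]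
              ring
      rw [inner_sub_left] at h4
      linarith
  have h01 := hanti (Set.mem_Icc.mpr ⟨le_refl 0, zero_le_one⟩)
      (Set.mem_Icc.mpr ⟨zero_le_one, le_refl 1⟩) zero_le_one
  simp only [hφ, zero_smul, add_zero, one_smul, zero_mul] at h01
  have hy : x + v = y := by rw [hv]; abel
  rw [hy] at h01
  nlinarith [h01]

end aux
section aux2
variable {F : Type*} [NormedAddCommGroup F] [InnerProductSpace ℝ F]

-- Young / Peter-Paul
lemma young_sq (a b : F) {s : ℝ} (hs : 0 < s) :
    ‖a + b‖ ^ 2 ≤ (1 + s) * ‖a‖ ^ 2 + (1 + 1/s) * ‖b‖ ^ 2 := by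
  have h1 : ‖a + b‖ ≤ ‖a‖ + ‖b‖ := norm_add_le a b
  have h2 : 0 ≤ ‖a + b‖ := norm_nonneg _
  have h3 : 0 ≤ ‖a‖ := norm_nonneg _
  have h4 : 0 ≤ ‖b‖ := norm_nonneg _
  have key : (‖a‖ + ‖b‖) ^ 2 ≤ (1 + s) * ‖a‖ ^ 2 + (1 + 1/s) * ‖b‖ ^ 2 := by
    have h5 : 0 ≤ (Real.sqrt s * ‖a‖ - ‖b‖ / Real.sqrt s) ^ 2 := sq_nonneg _
    have h6 : Real.sqrt s ^ 2 = s := Real.sq_sqrt hs.le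
    have h7 : 0 < Real.sqrt s := Real.sqrt_pos.mpr hs
    have h8 : (Real.sqrt s * ‖a‖) * (‖b‖ / Real.sqrt s) = ‖a‖ * ‖b‖ := by
      field_simp
    have h9 : (‖b‖ / Real.sqrt s) ^ 2 = ‖b‖ ^ 2 / s := by rw [div_pow, h6]
    have h10 : (1/s) * ‖b‖ ^ 2 = ‖b‖ ^ 2 / s := by ring
    nlinarith [h5, h6, h8, h9, mul_pow (Real.sqrt s) (‖a‖) 2]
  calc ‖a + b‖ ^ 2 ≤ (‖a‖ + ‖b‖) ^ 2 := by nlinarith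
    _ ≤ _ := key

-- four-term bound
lemma four_sq (a b e k : F) :
    ‖a - b + e - k‖ ^ 2 ≤ 4 * ‖a‖ ^ 2 + 4 * ‖b‖ ^ 2 + 4 * ‖e‖ ^ 2 + 4 * ‖k‖ ^ 2 := by
  have h1 : ‖a - b + e - k‖ ≤ ‖a‖ + ‖b‖ + ‖e‖ + ‖k‖ := by
    calc ‖a - b + e - k‖ ≤ ‖a - b + e‖ + ‖k‖ := norm_sub_le _ _
      _ ≤ ‖a - b‖ + ‖e‖ + ‖k‖ := by gcongr; exact norm_add_le _ _
      _ ≤ ‖a‖ + ‖b‖ + ‖e‖ + ‖k‖ := by gcongr; exact norm_sub_le _ _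
  nlinarith [norm_nonneg (a-b+e-k), norm_nonneg a, norm_nonneg b, norm_nonneg e, norm_nonneg k,
    sq_nonneg (‖a‖-‖b‖), sq_nonneg (‖a‖-‖e‖), sq_nonneg (‖a‖-‖k‖), sq_nonneg (‖b‖-‖e‖),
    sq_nonneg (‖b‖-‖k‖), sq_nonneg (‖e‖-‖k‖)]

-- Jensen for squared norm of average
lemma jensen_sq {ι : Type*} [Fintype ι] (v : ι → F) (hcard : 0 < Fintype.card ι) :
    ‖(Fintype.card ι : ℝ)⁻¹ • ∑ i, v i‖ ^ 2
      ≤ (1 / (Fintype.card ι : ℝ)) * ∑ i, ‖v i‖ ^ 2 := by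
  set G := (Fintype.card ι : ℝ) with hG
  have hG0 : (0:ℝ) < G := by rw [hG]; exact_mod_cast hcard
  have h1 : ‖(G:ℝ)⁻¹ • ∑ i, v i‖ = G⁻¹ * ‖∑ i, v i‖ := by
    rw [norm_smul, Real.norm_eq_abs, abs_inv, abs_of_nonneg hG0.le]
  have h2 : ‖∑ i, v i‖ ≤ ∑ i, ‖v i‖ := norm_sum_le _ _
  have h3 : (∑ i, ‖v i‖) ^ 2 ≤ G * ∑ i, ‖v i‖ ^ 2 := by
    have := sq_sum_le_card_mul_sum_sq (s := (univ : Finset ι)) (f := fun i => ‖v i‖)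
    simpa [hG] using this
  have h4 : ‖∑ i, v i‖ ^ 2 ≤ G * ∑ i, ‖v i‖ ^ 2 := by
    calc ‖∑ i, v i‖ ^ 2 ≤ (∑ i, ‖v i‖) ^ 2 := by
          apply sq_le_sq' <;> nlinarith [norm_nonneg (∑ i, v i), Finset.sum_nonneg (fun i (_ : i ∈ univ) => norm_nonneg (v i))]
      _ ≤ _ := h3
  rw [h1, mul_pow]
  rw [one_div]
  calc G⁻¹ ^ 2 * ‖∑ i, v i‖ ^ 2 ≤ G⁻¹ ^ 2 * (G * ∑ i, ‖v i‖ ^ 2) := by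
        apply mul_le_mul_of_nonneg_left h4 (by positivity)
    _ = G⁻¹ * ∑ i, ‖v i‖ ^ 2 := by field_simp

-- offDiag sum identity
lemma offDiag_sum_eq {ι : Type*} [Fintype ι] [DecidableEq ι] (u : ι → ℝ) :
    ∑ q ∈ Finset.univ.offDiag, (u q.1 + u q.2)
      = 2 * ((Fintype.card ι : ℝ) - 1) * ∑ i, u i := by
  classical
  have hoff : (Finset.univ.offDiag : Finset (ι × ι))
      = (Finset.univ ×ˢ Finset.univ).filter (fun p => p.1 ≠ p.2) := by ext p; simp [Finset.mem_offDiag]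
  have hsplit := Finset.sum_filter_add_sum_filter_not (Finset.univ ×ˢ Finset.univ)
    (fun p : ι × ι => p.1 = p.2) (fun p => u p.1 + u p.2)
  have hprod : ∑ p ∈ Finset.univ ×ˢ Finset.univ, (u p.1 + u p.2)
      = 2 * (Fintype.card ι : ℝ) * ∑ i, u i := by
    rw [Finset.sum_product]
    have hh : ∀ i : ι, (∑ l, (u i + u l)) = (Fintype.card ι : ℝ) * u i + ∑ l, u l := by
      intro i
      rw [Finset.sum_add_distrib, Finset.sum_const, Finset.card_univ, nsmul_eq_mul]
    rw [Finset.sum_congr rfl fun i _ => hh i, Finset.sum_add_distrib, Finset.sum_const,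
      Finset.card_univ, nsmul_eq_mul, ← Finset.mul_sum]
    ring
  have hdiag : ∑ p ∈ (Finset.univ ×ˢ Finset.univ).filter (fun p : ι × ι => p.1 = p.2),
      (u p.1 + u p.2) = 2 * ∑ i, u i := by
    rw [Finset.sum_filter, Finset.sum_product]
    simp only
    have : ∀ i : ι, (∑ l, if i = l then u i + u l else 0) = u i + u i := by
      intro i; rw [Finset.sum_ite_eq univ i (fun l => u i + u l)]; simp
    rw [Finset.sum_congr rfl (fun i _ => this i)]
    rw [Finset.sum_add_distrib]; ring
  have : ∑ p ∈ (Finset.univ ×ˢ Finset.univ).filter (fun p : ι × ι => ¬ p.1 = p.2),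
      (u p.1 + u p.2) = 2 * (Fintype.card ι : ℝ) * ∑ i, u i - 2 * ∑ i, u i := by
    rw [← hprod, ← hsplit, hdiag]; ring
  have hoff2 : (Finset.univ.offDiag : Finset (ι × ι))
      = (Finset.univ ×ˢ Finset.univ).filter (fun p : ι × ι => ¬ p.1 = p.2) := by
    ext p; simp [Finset.mem_offDiag]
  rw [hoff2, this]
  ring
end aux2

set_option maxHeartbeats 1000000 in
/-- Descent Lemma for Byz-EF21. -/
theorem descent_lemma_byz_ef21
    {d : ℕ} {ι : Type*} [Fintype ι] [DecidableEq ι]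
    (hG : 2 ≤ Fintype.card ι)
    -- local loss functions and their average
    (fS : ι → EuclideanSpace ℝ (Fin d) → ℝ)
    (f : EuclideanSpace ℝ (Fin d) → ℝ)
    (hf : ∀ x, f x = (1 / (Fintype.card ι : ℝ)) * ∑ i, fS i x)
    (hdiff : ∀ i, Differentiable ℝ (fS i))
    -- L-smoothness of f
    (L : ℝ) (hL : 0 ≤ L)
    (hsmooth : ∀ x y, ‖gradient f x - gradient f y‖ ≤ L * ‖x - y‖)
    -- (B, ζ²)-heterogeneity
    (B ζ : ℝ) (hB : 0 ≤ B) (hζ : 0 ≤ ζ)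
    (hhet : ∀ x, (1 / (Fintype.card ι : ℝ)) *
        ∑ i, ‖gradient (fS i) x - gradient f x‖ ^ 2
      ≤ B * ‖gradient f x‖ ^ 2 + ζ ^ 2)
    -- constants (with cδ > 0)
    (c δ γ : ℝ) (hc : 0 < c) (hδ0 : 0 < δ) (hδ : δ < 1 / 2) (hγ : 0 < γ)
    (hcδ : 0 < c * δ)
    -- underlying probability space and random vectors
    {Ω : Type*} [MeasurableSpace Ω] (μ : Measure Ω) [IsProbabilityMeasure μ]
    (xt : Ω → EuclideanSpace ℝ (Fin d))
    (g : ι → Ω → EuclideanSpace ℝ (Fin d))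
    (gt : Ω → EuclideanSpace ℝ (Fin d))
    (xt1 : Ω → EuclideanSpace ℝ (Fin d))
    (hstep : ∀ ω, xt1 ω = xt ω - γ • gt ω)
    -- robust aggregation bound
    (hagg : ∫ ω, ‖gt ω - (Fintype.card ι : ℝ)⁻¹ • ∑ i, g i ω‖ ^ 2 ∂μ
      ≤ c * δ * ((1 / ((Fintype.card ι : ℝ) * ((Fintype.card ι : ℝ) - 1))) *
          ∑ q ∈ Finset.univ.offDiag, ∫ ω, ‖g q.1 ω - g q.2 ω‖ ^ 2 ∂μ))
    -- integrability of all relevant quantities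
    (hint1 : Integrable (fun ω => f (xt1 ω)) μ)
    (hint2 : Integrable (fun ω => f (xt ω)) μ)
    (hint3 : Integrable (fun ω => ‖gradient f (xt ω)‖ ^ 2) μ)
    (hint4 : Integrable (fun ω => ‖xt1 ω - xt ω‖ ^ 2) μ)
    (hint5 : ∀ i, Integrable (fun ω => ‖g i ω - gradient (fS i) (xt ω)‖ ^ 2) μ)
    (hint6 : Integrable
      (fun ω => ‖(Fintype.card ι : ℝ)⁻¹ • ∑ i, g i ω - gradient f (xt ω)‖ ^ 2) μ)
    (hint7 : ∀ i l : ι, Integrable (fun ω => ‖g i ω - g l ω‖ ^ 2) μ)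
    (hint8 : Integrable
      (fun ω => ‖gt ω - (Fintype.card ι : ℝ)⁻¹ • ∑ i, g i ω‖ ^ 2) μ) :
    ∫ ω, f (xt1 ω) ∂μ
      ≤ ∫ ω, f (xt ω) ∂μ
        - (γ * (1 - 8 * B * c * δ * (1 + 1 / Real.sqrt (8 * c * δ))) / 2) *
            ∫ ω, ‖gradient f (xt ω)‖ ^ 2 ∂μ
        - (1 / (2 * γ) - L / 2) * ∫ ω, ‖xt1 ω - xt ω‖ ^ 2 ∂μ
        + (γ / 2) * (1 + Real.sqrt (8 * c * δ)) ^ 2 *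
            ∫ ω, (1 / (Fintype.card ι : ℝ)) *
              ∑ i, ‖g i ω - gradient (fS i) (xt ω)‖ ^ 2 ∂μ
        + 4 * γ * c * δ * (1 + 1 / Real.sqrt (8 * c * δ)) * ζ ^ 2 := by
  classical
  -- notation
  set s := Real.sqrt (8 * c * δ) with hsdef
  have hs2 : s ^ 2 = 8 * c * δ := Real.sq_sqrt (by positivity)
  have hs0 : 0 < s := Real.sqrt_pos.mpr (by positivity)
  have hG0 : (0:ℝ) < (Fintype.card ι : ℝ) := by
    have : 0 < Fintype.card ι := lt_of_lt_of_le (by norm_num) hG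
    exact_mod_cast this
  have hG1 : (1:ℝ) ≤ (Fintype.card ι : ℝ) - 1 := by
    have : (2:ℝ) ≤ (Fintype.card ι : ℝ) := by exact_mod_cast hG
    linarith
  have hGm1 : (0:ℝ) < (Fintype.card ι : ℝ) - 1 := by linarith
  -- differentiability and gradient of f
  have hfeq : f = fun x => (1 / (Fintype.card ι : ℝ)) * ∑ i, fS i x := funext hf
  have hfd : Differentiable ℝ f := by
    rw [hfeq]
    exact (Differentiable.fun_sum fun i _ => hdiff i).const_mul _
  have hgradf : ∀ x : EuclideanSpace ℝ (Fin d),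
      gradient f x = (1 / (Fintype.card ι : ℝ)) • ∑ i, gradient (fS i) x := by
    intro x
    conv_lhs => rw [hfeq]
    exact gradient_avg fS hdiff _ x
  -- pointwise descent bound
  have hpt : ∀ ω, f (xt1 ω) ≤ f (xt ω)
      - (γ/2) * ‖gradient f (xt ω)‖ ^ 2
      - (1/(2*γ) - L/2) * ‖xt1 ω - xt ω‖ ^ 2
      + (γ/2) * ((1 + 1/s) * ‖gt ω - (Fintype.card ι : ℝ)⁻¹ • ∑ i, g i ω‖ ^ 2
        + (1 + s) * ((1 / (Fintype.card ι : ℝ)) *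
            ∑ i, ‖g i ω - gradient (fS i) (xt ω)‖ ^ 2)) := by
    intro ω
    have hd := descent_aux f hfd hL hsmooth (xt ω) (xt1 ω)
    have hΔ : xt1 ω - xt ω = -(γ • gt ω) := by rw [hstep ω]; abel
    have e1 : (inner ℝ (gradient f (xt ω)) (xt1 ω - xt ω) : ℝ)
        = -(γ/2) * ‖gradient f (xt ω)‖ ^ 2 - (γ/2) * ‖gt ω‖ ^ 2
          + (γ/2) * ‖gt ω - gradient f (xt ω)‖ ^ 2 := by
      rw [hΔ, inner_neg_right, real_inner_smul_right]
      have := norm_sub_sq_real (gt ω) (gradient f (xt ω))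
      have hsymm : (inner ℝ (gradient f (xt ω)) (gt ω) : ℝ) = inner ℝ (gt ω) (gradient f (xt ω)) :=
        real_inner_comm _ _
      rw [hsymm]
      nlinarith [this]
    have e2 : ‖xt1 ω - xt ω‖ ^ 2 = γ ^ 2 * ‖gt ω‖ ^ 2 := by
      rw [hΔ, norm_neg, norm_smul, Real.norm_eq_abs, abs_of_pos hγ, mul_pow]
    have e3 : (1/(2*γ)) * ‖xt1 ω - xt ω‖ ^ 2 = (γ/2) * ‖gt ω‖ ^ 2 := by
      rw [e2]; field_simp
    -- Young + Jensen
    have hbar : gt ω - gradient f (xt ω)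
        = ((Fintype.card ι : ℝ)⁻¹ • ∑ i, g i ω - gradient f (xt ω))
          + (gt ω - (Fintype.card ι : ℝ)⁻¹ • ∑ i, g i ω) := by abel
    have hyoung := young_sq ((Fintype.card ι : ℝ)⁻¹ • ∑ i, g i ω - gradient f (xt ω))
      (gt ω - (Fintype.card ι : ℝ)⁻¹ • ∑ i, g i ω) hs0
    rw [← hbar] at hyoung
    have hjen : ‖(Fintype.card ι : ℝ)⁻¹ • ∑ i, g i ω - gradient f (xt ω)‖ ^ 2
        ≤ (1 / (Fintype.card ι : ℝ)) * ∑ i, ‖g i ω - gradient (fS i) (xt ω)‖ ^ 2 := by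
      have hrw : (Fintype.card ι : ℝ)⁻¹ • ∑ i, g i ω - gradient f (xt ω)
          = (Fintype.card ι : ℝ)⁻¹ • ∑ i, (g i ω - gradient (fS i) (xt ω)) := by
        rw [hgradf (xt ω), Finset.sum_sub_distrib, smul_sub, one_div]
      rw [hrw]
      exact jensen_sq _ (lt_of_lt_of_le (by norm_num) hG)
    have hA : ‖gt ω - gradient f (xt ω)‖ ^ 2
        ≤ (1 + 1/s) * ‖gt ω - (Fintype.card ι : ℝ)⁻¹ • ∑ i, g i ω‖ ^ 2
          + (1 + s) * ((1 / (Fintype.card ι : ℝ)) *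
            ∑ i, ‖g i ω - gradient (fS i) (xt ω)‖ ^ 2) := by
      have h1s : (0:ℝ) ≤ 1 + s := by linarith
      linarith [hyoung, mul_le_mul_of_nonneg_left hjen h1s]
    have hγ2 : (0:ℝ) < γ/2 := by linarith
    linarith [hd, e1, e3, mul_le_mul_of_nonneg_left hA hγ2.le]
  -- integrate the pointwise bound
  have hintS : Integrable (fun ω => (1 / (Fintype.card ι : ℝ)) *
      ∑ i, ‖g i ω - gradient (fS i) (xt ω)‖ ^ 2) μ :=
    (integrable_finset_sum _ fun i _ => hint5 i).const_mul _
  have hintRHS : Integrable (fun ω => f (xt ω)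
      - (γ/2) * ‖gradient f (xt ω)‖ ^ 2
      - (1/(2*γ) - L/2) * ‖xt1 ω - xt ω‖ ^ 2
      + (γ/2) * ((1 + 1/s) * ‖gt ω - (Fintype.card ι : ℝ)⁻¹ • ∑ i, g i ω‖ ^ 2
        + (1 + s) * ((1 / (Fintype.card ι : ℝ)) *
            ∑ i, ‖g i ω - gradient (fS i) (xt ω)‖ ^ 2))) μ :=
    (((hint2.sub (hint3.const_mul _)).sub (hint4.const_mul _)).add
      (((hint8.const_mul _).add (hintS.const_mul _)).const_mul _))
  have hI : ∫ ω, f (xt1 ω) ∂μ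
      ≤ ∫ ω, f (xt ω) ∂μ
        - (γ/2) * ∫ ω, ‖gradient f (xt ω)‖ ^ 2 ∂μ
        - (1/(2*γ) - L/2) * ∫ ω, ‖xt1 ω - xt ω‖ ^ 2 ∂μ
        + (γ/2) * ((1 + 1/s) * ∫ ω, ‖gt ω - (Fintype.card ι : ℝ)⁻¹ • ∑ i, g i ω‖ ^ 2 ∂μ
          + (1 + s) * ∫ ω, (1 / (Fintype.card ι : ℝ)) *
              ∑ i, ‖g i ω - gradient (fS i) (xt ω)‖ ^ 2 ∂μ) := by
    have hmono := integral_mono hint1 hintRHS hpt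
    have i3 : Integrable (fun ω => (γ/2) * ‖gradient f (xt ω)‖ ^ 2) μ := hint3.const_mul _
    have i4 : Integrable (fun ω => (1/(2*γ) - L/2) * ‖xt1 ω - xt ω‖ ^ 2) μ :=
      hint4.const_mul _
    have i8 : Integrable (fun ω =>
        (1 + 1/s) * ‖gt ω - (Fintype.card ι : ℝ)⁻¹ • ∑ i, g i ω‖ ^ 2) μ :=
      hint8.const_mul _
    have iS : Integrable (fun ω => (1 + s) * ((1 / (Fintype.card ι : ℝ)) *
        ∑ i, ‖g i ω - gradient (fS i) (xt ω)‖ ^ 2)) μ := hintS.const_mul _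
    have i23 : Integrable (fun ω => f (xt ω) - (γ/2) * ‖gradient f (xt ω)‖ ^ 2) μ :=
      hint2.sub i3
    have i24 : Integrable (fun ω => f (xt ω) - (γ/2) * ‖gradient f (xt ω)‖ ^ 2
        - (1/(2*γ) - L/2) * ‖xt1 ω - xt ω‖ ^ 2) μ := i23.sub i4
    have i85 : Integrable (fun ω =>
        (1 + 1/s) * ‖gt ω - (Fintype.card ι : ℝ)⁻¹ • ∑ i, g i ω‖ ^ 2
        + (1 + s) * ((1 / (Fintype.card ι : ℝ)) *
            ∑ i, ‖g i ω - gradient (fS i) (xt ω)‖ ^ 2)) μ := i8.add iS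
    calc ∫ ω, f (xt1 ω) ∂μ ≤ _ := hmono
      _ = _ := by
        rw [integral_add i24 (i85.const_mul _),
          integral_sub i23 i4,
          integral_sub hint2 i3,
          integral_const_mul, integral_const_mul, integral_const_mul,
          integral_add i8 iS,
          integral_const_mul, integral_const_mul]
  -- bound the aggregation error
  set N := ∫ ω, ‖gradient f (xt ω)‖ ^ 2 ∂μ with hN
  set S := ∫ ω, (1 / (Fintype.card ι : ℝ)) *
      ∑ i, ‖g i ω - gradient (fS i) (xt ω)‖ ^ 2 ∂μ with hSdef
  have hSA : ∑ i, ∫ ω, ‖g i ω - gradient (fS i) (xt ω)‖ ^ 2 ∂μ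
      = (Fintype.card ι : ℝ) * S := by
    rw [hSdef, integral_const_mul, integral_finset_sum _ fun i _ => hint5 i,
      ← mul_assoc, mul_one_div, div_self (ne_of_gt hG0), one_mul]
  have hT : ∑ q ∈ Finset.univ.offDiag, ∫ ω, ‖g q.1 ω - g q.2 ω‖ ^ 2 ∂μ
      ≤ 8 * ((Fintype.card ι : ℝ) - 1) * ((Fintype.card ι : ℝ) * S)
        + 8 * ((Fintype.card ι : ℝ) - 1) * (Fintype.card ι : ℝ) * (B * N + ζ ^ 2) := by
    have hptT : ∀ ω, ∑ q ∈ Finset.univ.offDiag, ‖g q.1 ω - g q.2 ω‖ ^ 2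
        ≤ 8 * ((Fintype.card ι : ℝ) - 1) *
            (∑ i, ‖g i ω - gradient (fS i) (xt ω)‖ ^ 2)
          + 8 * ((Fintype.card ι : ℝ) - 1) * (Fintype.card ι : ℝ) *
            (B * ‖gradient f (xt ω)‖ ^ 2 + ζ ^ 2) := by
      intro ω
      have hpair : ∀ q ∈ Finset.univ.offDiag (α := ι), ‖g q.1 ω - g q.2 ω‖ ^ 2
          ≤ (4 * ‖g q.1 ω - gradient (fS q.1) (xt ω)‖ ^ 2
              + 4 * ‖gradient (fS q.1) (xt ω) - gradient f (xt ω)‖ ^ 2)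
            + (4 * ‖g q.2 ω - gradient (fS q.2) (xt ω)‖ ^ 2
              + 4 * ‖gradient (fS q.2) (xt ω) - gradient f (xt ω)‖ ^ 2) := by
        intro q _
        have hrw : g q.1 ω - g q.2 ω
            = (g q.1 ω - gradient (fS q.1) (xt ω)) - (g q.2 ω - gradient (fS q.2) (xt ω))
              + (gradient (fS q.1) (xt ω) - gradient f (xt ω))
              - (gradient (fS q.2) (xt ω) - gradient f (xt ω)) := by abel
        rw [hrw]
        have := four_sq (g q.1 ω - gradient (fS q.1) (xt ω))
          (g q.2 ω - gradient (fS q.2) (xt ω))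
          (gradient (fS q.1) (xt ω) - gradient f (xt ω))
          (gradient (fS q.2) (xt ω) - gradient f (xt ω))
        linarith
      have hsum := Finset.sum_le_sum hpair
      have hoff := offDiag_sum_eq (ι := ι) (fun i =>
        4 * ‖g i ω - gradient (fS i) (xt ω)‖ ^ 2
          + 4 * ‖gradient (fS i) (xt ω) - gradient f (xt ω)‖ ^ 2)
      rw [hoff] at hsum
      have hk : ∑ i, ‖gradient (fS i) (xt ω) - gradient f (xt ω)‖ ^ 2
          ≤ (Fintype.card ι : ℝ) * (B * ‖gradient f (xt ω)‖ ^ 2 + ζ ^ 2) := by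
        have hh := hhet (xt ω)
        calc ∑ i, ‖gradient (fS i) (xt ω) - gradient f (xt ω)‖ ^ 2
            = (Fintype.card ι : ℝ) * ((1 / (Fintype.card ι : ℝ)) *
                ∑ i, ‖gradient (fS i) (xt ω) - gradient f (xt ω)‖ ^ 2) := by
              rw [← mul_assoc, mul_one_div, div_self (ne_of_gt hG0), one_mul]
          _ ≤ (Fintype.card ι : ℝ) * (B * ‖gradient f (xt ω)‖ ^ 2 + ζ ^ 2) :=
              mul_le_mul_of_nonneg_left hh hG0.le
      rw [Finset.sum_add_distrib, ← Finset.mul_sum, ← Finset.mul_sum] at hsum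
      nlinarith [hsum, hk, hGm1]
    have hintL : Integrable (fun ω => ∑ q ∈ Finset.univ.offDiag (α := ι),
        ‖g q.1 ω - g q.2 ω‖ ^ 2) μ :=
      integrable_finset_sum _ fun q _ => hint7 q.1 q.2
    have hintR : Integrable (fun ω =>
        8 * ((Fintype.card ι : ℝ) - 1) *
          (∑ i, ‖g i ω - gradient (fS i) (xt ω)‖ ^ 2)
        + 8 * ((Fintype.card ι : ℝ) - 1) * (Fintype.card ι : ℝ) *
          (B * ‖gradient f (xt ω)‖ ^ 2 + ζ ^ 2)) μ :=
      ((integrable_finset_sum _ fun i _ => hint5 i).const_mul _).add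
        (((hint3.const_mul B).add (integrable_const _)).const_mul _)
    have hmono := integral_mono hintL hintR hptT
    have j1 : Integrable (fun ω => 8 * ((Fintype.card ι : ℝ) - 1) *
        (∑ i, ‖g i ω - gradient (fS i) (xt ω)‖ ^ 2)) μ :=
      (integrable_finset_sum _ fun i _ => hint5 i).const_mul _
    have jB : Integrable (fun ω => B * ‖gradient f (xt ω)‖ ^ 2) μ := hint3.const_mul B
    have j2 : Integrable (fun ω => B * ‖gradient f (xt ω)‖ ^ 2 + ζ ^ 2) μ :=
      jB.add (integrable_const _)
    rw [integral_finset_sum _ (fun q _ => hint7 q.1 q.2),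
      integral_add j1 (j2.const_mul _),
      integral_const_mul, integral_const_mul,
      integral_add jB (integrable_const _),
      integral_const_mul,
      integral_finset_sum _ (fun i _ => hint5 i), hSA] at hmono
    simp only [integral_const, measure_univ, probReal_univ, ENNReal.toReal_one, smul_eq_mul, one_mul] at hmono
    linarith [hmono, hN]
  have hAgg : ∫ ω, ‖gt ω - (Fintype.card ι : ℝ)⁻¹ • ∑ i, g i ω‖ ^ 2 ∂μ
      ≤ 8 * c * δ * S + 8 * c * δ * B * N + 8 * c * δ * ζ ^ 2 := by
    have h1 : (0:ℝ) < (Fintype.card ι : ℝ) * ((Fintype.card ι : ℝ) - 1) :=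
      mul_pos hG0 hGm1
    have h2 : c * δ * ((1 / ((Fintype.card ι : ℝ) * ((Fintype.card ι : ℝ) - 1))) *
          ∑ q ∈ Finset.univ.offDiag, ∫ ω, ‖g q.1 ω - g q.2 ω‖ ^ 2 ∂μ)
        ≤ c * δ * ((1 / ((Fintype.card ι : ℝ) * ((Fintype.card ι : ℝ) - 1))) *
          (8 * ((Fintype.card ι : ℝ) - 1) * ((Fintype.card ι : ℝ) * S)
            + 8 * ((Fintype.card ι : ℝ) - 1) * (Fintype.card ι : ℝ) * (B * N + ζ ^ 2))) := by
      apply mul_le_mul_of_nonneg_left _ hcδ.le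
      apply mul_le_mul_of_nonneg_left hT (by positivity)
    have h3 : (1 / ((Fintype.card ι : ℝ) * ((Fintype.card ι : ℝ) - 1))) *
          (8 * ((Fintype.card ι : ℝ) - 1) * ((Fintype.card ι : ℝ) * S)
            + 8 * ((Fintype.card ι : ℝ) - 1) * (Fintype.card ι : ℝ) * (B * N + ζ ^ 2))
        = 8 * S + 8 * (B * N + ζ ^ 2) := by
      field_simp
    rw [h3] at h2
    calc ∫ ω, ‖gt ω - (Fintype.card ι : ℝ)⁻¹ • ∑ i, g i ω‖ ^ 2 ∂μ
        ≤ _ := hagg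
      _ ≤ c * δ * (8 * S + 8 * (B * N + ζ ^ 2)) := h2
      _ = 8 * c * δ * S + 8 * c * δ * B * N + 8 * c * δ * ζ ^ 2 := by ring
  -- combine
  have hcoef : (0:ℝ) ≤ (γ/2) * (1 + 1/s) := by positivity
  have hstep2 := mul_le_mul_of_nonneg_left hAgg hcoef
  calc ∫ ω, f (xt1 ω) ∂μ ≤ _ := hI
    _ ≤ ∫ ω, f (xt ω) ∂μ - (γ/2) * N - (1/(2*γ) - L/2) * ∫ ω, ‖xt1 ω - xt ω‖ ^ 2 ∂μ
        + ((γ/2) * (1 + 1/s) * (8 * c * δ * S + 8 * c * δ * B * N + 8 * c * δ * ζ ^ 2)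
          + (γ/2) * (1 + s) * S) := by
      rw [hN, hSdef]
      linarith [hstep2]
    _ = _ := by
      have hs3 : s ^ 2 * s⁻¹ = s := by
        field_simp
      linear_combination (-(γ*S/2)*(1+1/s)) * hs2 + (γ*S/2) * hs3
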